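/- For m ≥ 2 and t ≥ 1, the generalized Mycielskian μ_t(K_{1,m}) has no distinguishing edge coloring with fewer than r colors, where r is the minimum natural number such that r² ≥ m + 1; that is, Dist′(μ_t(K_{1,m})) ≥ r. -/

import Mathlib

open SimpleGraph

universe u

/-- A distinguishing edge coloring: no nontrivial automorphism preserves the coloring. -/
def IsDistEdgeColoring {V : Type u} (G : SimpleGraph V) {C : Type*} (c : G.edgeSet → C) : Prop :=
  ∀ φ : G ≃g G, (∀ e : G.edgeSet, c (φ.mapEdgeSet e) = c e) → ∀ v, φ v = v

/-- The distinguishing index: least number of colors in a distinguishing edge coloring. -/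
noncomputable def distIndex {V : Type u} (G : SimpleGraph V) : ℕ :=
  sInf {k : ℕ | ∃ c : G.edgeSet → Fin k, IsDistEdgeColoring G c}

/-- The star `K_{1,m}` with center `0`. -/
def starGraphK1n (m : ℕ) : SimpleGraph (Fin (m + 1)) :=
  SimpleGraph.fromRel fun a _ => a = 0

/-- The Mycielskian: `Sum.inl a` are original vertices, `Sum.inr (Sum.inl a)` their
shadows, and `Sum.inr (Sum.inr _)` the root. -/
def myc {V : Type u} (G : SimpleGraph V) : SimpleGraph (V ⊕ V ⊕ PUnit.{u+1}) :=
  SimpleGraph.fromRel fun x y =>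
    match x, y with
    | Sum.inl a, Sum.inl b => G.Adj a b
    | Sum.inl a, Sum.inr (Sum.inl b) => G.Adj a b
    | Sum.inr (Sum.inl _), Sum.inr (Sum.inr _) => True
    | _, _ => False

/-- The generalized Mycielskian with `t` extra levels: `Sum.inl (j, a)` is the level-`j`
copy of vertex `a` (level `0` being the original vertices), and `Sum.inr _` is the root. -/
def genMyc {V : Type u} (G : SimpleGraph V) (t : ℕ) :
    SimpleGraph ((Fin (t + 1) × V) ⊕ PUnit.{u+1}) :=
  SimpleGraph.fromRel fun x y =>
    match x, y with
    | Sum.inl (j, a), Sum.inl (k, b) =>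
        ((j.val = 0 ∧ k.val = 0) ∨ k.val = j.val + 1) ∧ G.Adj a b
    | Sum.inl (j, _), Sum.inr _ => j.val = t
    | _, _ => False

namespace MycStar

variable {m t : ℕ}

abbrev VV (m t : ℕ) : Type := (Fin (t + 1) × Fin (m + 1)) ⊕ PUnit.{1}

abbrev GG (m t : ℕ) : SimpleGraph (VV m t) := genMyc (starGraphK1n m) t

def lf (j : Fin (t + 1)) (a : Fin (m + 1)) : VV m t := Sum.inl (j, a)

def rt : VV m t := Sum.inr PUnit.unit

/-- down neighbor of a leaf at level j -/
def Dv (m : ℕ) (j : Fin (t + 1)) : VV m t := Sum.inl (⟨j.val - 1, by omega⟩, 0)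

/-- up neighbor of a leaf at level j -/
def Uv (m : ℕ) (j : Fin (t + 1)) : VV m t :=
  if h : j.val = t then rt else Sum.inl (⟨j.val + 1, by omega⟩, 0)

lemma star_adj (a b : Fin (m + 1)) : (starGraphK1n m).Adj a b ↔ a ≠ b ∧ (a = 0 ∨ b = 0) := by
  rw [starGraphK1n, SimpleGraph.fromRel_adj]

lemma adj_ll (j k : Fin (t+1)) (a b : Fin (m+1)) :
    (GG m t).Adj (Sum.inl (j,a)) (Sum.inl (k,b)) ↔
    (j, a) ≠ (k, b) ∧
      ((((j.val = 0 ∧ k.val = 0) ∨ k.val = j.val + 1) ∧ (starGraphK1n m).Adj a b) ∨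
       (((k.val = 0 ∧ j.val = 0) ∨ j.val = k.val + 1) ∧ (starGraphK1n m).Adj b a)) := by
  show (genMyc (starGraphK1n m) t).Adj _ _ ↔ _
  rw [genMyc, SimpleGraph.fromRel_adj]
  simp

lemma adj_lr (j : Fin (t+1)) (a : Fin (m+1)) :
    (GG m t).Adj (Sum.inl (j,a)) rt ↔ j.val = t := by
  show (genMyc (starGraphK1n m) t).Adj _ _ ↔ _
  rw [genMyc, SimpleGraph.fromRel_adj]
  constructor
  · rintro ⟨-, h | h⟩
    · exact h
    · exact h.elim
  · intro h; exact ⟨by simp [rt], Or.inl h⟩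

lemma adj_rl (j : Fin (t+1)) (a : Fin (m+1)) :
    (GG m t).Adj rt (Sum.inl (j,a)) ↔ j.val = t := by
  rw [(GG m t).adj_comm]; exact adj_lr j a

lemma not_adj_rr : ¬ (GG m t).Adj rt rt := (GG m t).irrefl

/-- a leaf is adjacent to its down neighbor -/
lemma adj_lf_Dv (j : Fin (t+1)) (a : Fin (m+1)) (ha : a ≠ 0) :
    (GG m t).Adj (lf j a) (Dv m j) := by
  rw [lf, Dv, adj_ll]
  constructor
  · intro h
    rw [Prod.mk.injEq] at h
    exact ha h.2
  · have hs : (starGraphK1n m).Adj a 0 := (star_adj a 0).2 ⟨ha, Or.inr rfl⟩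
    have hs' : (starGraphK1n m).Adj 0 a := (star_adj 0 a).2 ⟨fun h => ha h.symm, Or.inl rfl⟩
    rcases Nat.eq_zero_or_pos j.val with h0 | hpos
    · exact Or.inl ⟨Or.inl ⟨h0, by simp [h0]⟩, hs⟩
    · exact Or.inr ⟨Or.inr (by simp; omega), hs'⟩

/-- a leaf is adjacent to its up neighbor -/
lemma adj_lf_Uv (j : Fin (t+1)) (a : Fin (m+1)) (ha : a ≠ 0) :
    (GG m t).Adj (lf j a) (Uv m j) := by
  rw [lf, Uv]
  split
  · rename_i h; exact (adj_lr j a).2 h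
  · rename_i h
    rw [adj_ll]
    constructor
    · intro hh
      rw [Prod.mk.injEq] at hh
      have := congrArg Fin.val hh.1
      simp at this
    · exact Or.inl ⟨Or.inr (by simp), (star_adj a 0).2 ⟨ha, Or.inr rfl⟩⟩

lemma Dv_ne_Uv (j : Fin (t+1)) : Dv m j ≠ Uv m j := by
  rw [Dv, Uv]
  split
  · rw [rt]; simp
  · intro h
    rw [Sum.inl.injEq, Prod.mk.injEq] at h
    have := congrArg Fin.val h.1
    simp at this

/-- classification of neighbors of a leaf -/
lemma adj_lf_iff (j : Fin (t+1)) (a : Fin (m+1)) (ha : a ≠ 0) (y : VV m t) :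
    (GG m t).Adj (lf j a) y ↔ y = Dv m j ∨ y = Uv m j := by
  constructor
  · intro h
    rcases y with ⟨k, b⟩ | u
    · rw [lf, adj_ll] at h
      obtain ⟨hne, hor⟩ := h
      have hb : b = 0 := by
        rcases hor with ⟨-, hs⟩ | ⟨-, hs⟩ <;> rw [star_adj] at hs <;>
          rcases hs with ⟨hne', h0 | h0⟩ <;> first | exact h0 | exact absurd h0 ha
      subst hb
      rcases hor with ⟨hl | hl, -⟩ | ⟨hl | hl, -⟩
      · left; rw [Dv]; congr 1; rw [Prod.mk.injEq]
        exact ⟨Fin.ext (show k.val = j.val - 1 by omega), rfl⟩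
      · right; rw [Uv]; rw [dif_neg (by omega)]; congr 1; rw [Prod.mk.injEq]
        exact ⟨Fin.ext (show k.val = j.val + 1 by omega), rfl⟩
      · left; rw [Dv]; congr 1; rw [Prod.mk.injEq]
        exact ⟨Fin.ext (show k.val = j.val - 1 by omega), rfl⟩
      · left; rw [Dv]; congr 1; rw [Prod.mk.injEq]
        exact ⟨Fin.ext (show k.val = j.val - 1 by omega), rfl⟩
    · rw [lf, show Sum.inr PUnit.unit = (rt : VV m t) from rfl, adj_lr] at h
      right; rw [Uv, dif_pos h]; rfl
  · rintro (h | h) <;> subst h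
    · exact adj_lf_Dv j a ha
    · exact adj_lf_Uv j a ha

/-- classification of all edges -/
lemma edge_classify {x y : VV m t} (h : (GG m t).Adj x y) :
    (∃ j a, a ≠ 0 ∧ ((x = lf j a ∧ (y = Dv m j ∨ y = Uv m j)) ∨
                      (y = lf j a ∧ (x = Dv m j ∨ x = Uv m j)))) ∨
    ((x = lf (Fin.last t) 0 ∧ y = rt) ∨ (y = lf (Fin.last t) 0 ∧ x = rt)) := by
  rcases x with ⟨j, a⟩ | u <;> rcases y with ⟨k, b⟩ | u'
  · by_cases ha : a = 0
    · by_cases hb : b = 0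
      · exfalso
        subst ha; subst hb
        rw [adj_ll] at h
        rcases h.2 with ⟨-, hs⟩ | ⟨-, hs⟩ <;> exact absurd rfl ((star_adj _ _).1 hs).1
      · left
        exact ⟨k, b, hb, Or.inr ⟨rfl, (adj_lf_iff k b hb _).1 h.symm⟩⟩
    · left
      exact ⟨j, a, ha, Or.inl ⟨rfl, (adj_lf_iff j a ha _).1 h⟩⟩
  · cases u'
    have hj : j.val = t := (adj_lr j a).1 h
    by_cases ha : a = 0
    · right; left
      subst ha
      exact ⟨by rw [lf]; congr 1; exact Prod.ext (Fin.ext hj) rfl, rfl⟩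
    · left
      refine ⟨j, a, ha, Or.inl ⟨rfl, Or.inr ?_⟩⟩
      rw [Uv, dif_pos hj]; rfl
  · cases u
    have hk : k.val = t := (adj_rl k b).1 h
    by_cases hb : b = 0
    · right; right
      subst hb
      exact ⟨by rw [lf]; congr 1; exact Prod.ext (Fin.ext hk) rfl, rfl⟩
    · left
      refine ⟨k, b, hb, Or.inr ⟨rfl, Or.inr ?_⟩⟩
      rw [Uv, dif_pos hk]; rfl
  · cases u; cases u'; exact absurd h not_adj_rr

section Swap

variable {W : Type u} [DecidableEq W]

lemma swap_adj (H : SimpleGraph W) (a b : W) (hab : ¬ H.Adj a b)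
    (htwin : ∀ x, H.Adj a x ↔ H.Adj b x) {x y : W} (h : H.Adj x y) :
    H.Adj (Equiv.swap a b x) (Equiv.swap a b y) := by
  rcases eq_or_ne x a with heq | hxa
  · subst heq
    rw [Equiv.swap_apply_left]
    rcases eq_or_ne y x with heq' | hya
    · subst heq'; exact absurd h H.irrefl
    · rcases eq_or_ne y b with heq' | hyb
      · subst heq'; exact absurd h hab
      · rw [Equiv.swap_apply_of_ne_of_ne hya hyb]
        exact (htwin y).1 h
  · rcases eq_or_ne x b with heq | hxb
    · subst heq
      rw [Equiv.swap_apply_right]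
      rcases eq_or_ne y a with heq' | hya
      · subst heq'; exact absurd h.symm hab
      · rcases eq_or_ne y x with heq' | hyb
        · subst heq'; exact absurd h H.irrefl
        · rw [Equiv.swap_apply_of_ne_of_ne hya hyb]
          exact (htwin y).2 h
    · rw [Equiv.swap_apply_of_ne_of_ne hxa hxb]
      rcases eq_or_ne y a with heq' | hya
      · subst heq'
        rw [Equiv.swap_apply_left]
        exact ((htwin x).1 h.symm).symm
      · rcases eq_or_ne y b with heq' | hyb
        · subst heq'
          rw [Equiv.swap_apply_right]
          exact ((htwin x).2 h.symm).symm
        · rw [Equiv.swap_apply_of_ne_of_ne hya hyb]; exact h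

/-- swapping two nonadjacent twins is an automorphism -/
def swapIso (H : SimpleGraph W) (a b : W) (hab : ¬ H.Adj a b)
    (htwin : ∀ x, H.Adj a x ↔ H.Adj b x) : H ≃g H where
  toEquiv := Equiv.swap a b
  map_rel_iff' := by
    intro x y
    constructor
    · intro h
      have h2 := swap_adj H a b hab htwin h
      simpa using h2
    · exact swap_adj H a b hab htwin

@[simp] lemma swapIso_apply (H : SimpleGraph W) (a b : W) (hab : ¬ H.Adj a b)
    (htwin : ∀ x, H.Adj a x ↔ H.Adj b x) (x : W) :
    swapIso H a b hab htwin x = Equiv.swap a b x := rfl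

end Swap

/-- every vertex has two distinct neighbors -/
lemma two_nbrs (hm : 2 ≤ m) (v : VV m t) :
    ∃ x y : VV m t, x ≠ y ∧ (GG m t).Adj v x ∧ (GG m t).Adj v y := by
  have h1 : (⟨1, by omega⟩ : Fin (m+1)) ≠ 0 := by
    intro h; exact absurd (congrArg Fin.val h) (by simp)
  have h2 : (⟨2, by omega⟩ : Fin (m+1)) ≠ 0 := by
    intro h; exact absurd (congrArg Fin.val h) (by simp)
  have h12 : (⟨1, by omega⟩ : Fin (m+1)) ≠ ⟨2, by omega⟩ := by
    intro h; exact absurd (congrArg Fin.val h) (by simp)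
  rcases v with ⟨j, a⟩ | u
  · by_cases ha : a = 0
    · subst ha
      set j' : Fin (t+1) := ⟨j.val - 1, by omega⟩ with hj'
      have hctr : (Sum.inl (j, 0) : VV m t) = Dv m j' ∨ Sum.inl (j, 0) = Uv m j' := by
        by_cases h0 : j.val = 0
        · left; rw [Dv]; congr 2; exact Fin.ext (by simp [hj']; omega)
        · right; rw [Uv, dif_neg (by simp [hj']; omega)]
          congr 2; exact Fin.ext (by simp [hj']; omega)
      refine ⟨lf j' ⟨1, by omega⟩, lf j' ⟨2, by omega⟩, ?_, ?_, ?_⟩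
      · intro h; rw [lf, lf, Sum.inl.injEq, Prod.mk.injEq] at h
        exact h12 h.2
      · rcases hctr with h | h <;> rw [h]
        · exact (adj_lf_Dv j' _ h1).symm
        · exact (adj_lf_Uv j' _ h1).symm
      · rcases hctr with h | h <;> rw [h]
        · exact (adj_lf_Dv j' _ h2).symm
        · exact (adj_lf_Uv j' _ h2).symm
    · refine ⟨Dv m j, Uv m j, Dv_ne_Uv j, ?_, ?_⟩
      · exact adj_lf_Dv j a ha
      · exact adj_lf_Uv j a ha
  · cases u
    refine ⟨lf (Fin.last t) ⟨1, by omega⟩, lf (Fin.last t) ⟨2, by omega⟩, ?_, ?_, ?_⟩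
    · intro h; rw [lf, lf, Sum.inl.injEq, Prod.mk.injEq] at h
      exact h12 h.2
    · exact (adj_rl _ _).2 (by simp)
    · exact (adj_rl _ _).2 (by simp)

/-- any graph where every vertex has two distinct neighbors admits a distinguishing
edge coloring (with enough colors). -/
lemma exists_dist {W : Type u} [Finite W] (H : SimpleGraph W)
    (h2 : ∀ v, ∃ x y, x ≠ y ∧ H.Adj v x ∧ H.Adj v y) :
    ∃ k, ∃ c : H.edgeSet → Fin k, IsDistEdgeColoring H c := by
  have : Finite H.edgeSet := by
    have : Finite (Sym2 W) := by infer_instance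
    exact Subtype.finite
  obtain ⟨n, ⟨e⟩⟩ := Finite.exists_equiv_fin H.edgeSet
  refine ⟨n, e, ?_⟩
  intro φ hpres v
  have hfix : ∀ x y (h : H.Adj x y), s(φ x, φ y) = s(x, y) := by
    intro x y h
    have := hpres ⟨s(x,y), h⟩
    have heq := e.injective this
    have hval : (φ.mapEdgeSet ⟨s(x,y), h⟩ : Sym2 W) = s(x, y) := congrArg Subtype.val heq
    have hval2 : (φ.mapEdgeSet ⟨s(x,y), h⟩ : Sym2 W) = s(φ x, φ y) := rfl
    rw [hval2] at hval
    exact hval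
  obtain ⟨x, y, hxy, hvx, hvy⟩ := h2 v
  have e1 := hfix v x hvx
  have e2 := hfix v y hvy
  rw [Sym2.eq_iff] at e1 e2
  rcases e1 with ⟨h, -⟩ | ⟨h1, -⟩
  · exact h
  · rcases e2 with ⟨h, -⟩ | ⟨h2', -⟩
    · exact h
    · exact absurd (h1 ▸ h2') hxy

lemma Dv_ne_lf (j' j : Fin (t+1)) (a : Fin (m+1)) (ha : a ≠ 0) : Dv m j' ≠ lf j a := by
  rw [Dv, lf]
  intro h
  rw [Sum.inl.injEq, Prod.mk.injEq] at h
  exact ha h.2.symm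

lemma Uv_ne_lf (j' j : Fin (t+1)) (a : Fin (m+1)) (ha : a ≠ 0) : Uv m j' ≠ lf j a := by
  rw [Uv, lf]
  split
  · rw [rt]; simp
  · intro h
    rw [Sum.inl.injEq, Prod.mk.injEq] at h
    exact ha h.2.symm

lemma lf_twin (j : Fin (t+1)) (a b : Fin (m+1)) (ha : a ≠ 0) (hb : b ≠ 0) :
    ∀ x, (GG m t).Adj (lf j a) x ↔ (GG m t).Adj (lf j b) x := by
  intro x
  rw [adj_lf_iff j a ha, adj_lf_iff j b hb]

lemma lf_not_adj (j : Fin (t+1)) (a b : Fin (m+1)) (ha : a ≠ 0) (hb : b ≠ 0) :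
    ¬ (GG m t).Adj (lf j a) (lf j b) := by
  intro h
  rcases (adj_lf_iff j a ha _).1 h with h' | h'
  · exact Dv_ne_lf j j b hb h'.symm
  · exact Uv_ne_lf j j b hb h'.symm

lemma color_congr {W : Type u} {H : SimpleGraph W} {C : Type*} (c : H.edgeSet → C)
    {e1 e2 : H.edgeSet} (h : (e1 : Sym2 W) = e2) : c e1 = c e2 :=
  congrArg c (Subtype.ext h)

lemma iso_mapEdgeSet_val {W : Type u} {H : SimpleGraph W} (φ : H ≃g H) (x y : W)
    (h : H.Adj x y) : ((φ.mapEdgeSet ⟨s(x,y), h⟩ : H.edgeSet) : Sym2 W) = s(φ x, φ y) := rfl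

section Coloring

variable {k : ℕ} (c : (GG m t).edgeSet → Fin k)

/-- the pair of colors of the two edges at a leaf -/
def pr (j : Fin (t+1)) (a : {a : Fin (m+1) // a ≠ 0}) : Fin k × Fin k :=
  (c ⟨s(lf j a.val, Dv m j), adj_lf_Dv j a.val a.2⟩,
   c ⟨s(lf j a.val, Uv m j), adj_lf_Uv j a.val a.2⟩)

lemma pr_injective (hc : IsDistEdgeColoring (GG m t) c) (j : Fin (t+1)) :
    Function.Injective (pr c j) := by
  intro a b hpr
  by_contra hne
  have hAB : lf j a.val ≠ lf j b.val := by
    intro h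
    rw [lf, lf, Sum.inl.injEq, Prod.mk.injEq] at h
    exact hne (Subtype.ext h.2)
  set A := lf j a.val with hA
  set B := lf j b.val with hB
  have hnadj : ¬ (GG m t).Adj A B := lf_not_adj j a.val b.val a.2 b.2
  have htwin := lf_twin j a.val b.val a.2 b.2
  set τ := swapIso (GG m t) A B hnadj htwin with hτ
  -- color preservation
  have hpres : ∀ e : (GG m t).edgeSet, c (τ.mapEdgeSet e) = c e := by
    rintro ⟨e, he⟩
    induction e using Sym2.ind with
    | _ x y =>
    have colAB : ∀ (z : VV m t) (h1 : (GG m t).Adj A z) (h2 : (GG m t).Adj B z),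
        c ⟨s(A, z), h1⟩ = c ⟨s(B, z), h2⟩ := by
      intro z h1 h2
      rcases (adj_lf_iff j a.val a.2 z).1 h1 with rfl | rfl
      · have e1 : c ⟨s(A, Dv m j), h1⟩ = (pr c j a).1 := color_congr c rfl
        have e2 : c ⟨s(B, Dv m j), h2⟩ = (pr c j b).1 := color_congr c rfl
        rw [e1, e2, hpr]
      · have e1 : c ⟨s(A, Uv m j), h1⟩ = (pr c j a).2 := color_congr c rfl
        have e2 : c ⟨s(B, Uv m j), h2⟩ = (pr c j b).2 := color_congr c rfl
        rw [e1, e2, hpr]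
    have hne_z : ∀ z : VV m t, (GG m t).Adj A z → z ≠ A ∧ z ≠ B := by
      intro z hz
      rcases (adj_lf_iff j a.val a.2 z).1 hz with rfl | rfl
      · exact ⟨Dv_ne_lf j j a.val a.2, Dv_ne_lf j j b.val b.2⟩
      · exact ⟨Uv_ne_lf j j a.val a.2, Uv_ne_lf j j b.val b.2⟩
    -- the goal is `c (τ.mapEdgeSet ⟨s(x,y), he⟩) = c ⟨s(x,y), he⟩`, and the
    -- value of the mapped edge is definitionally `s(τ x, τ y)`
    by_cases hxA : x = A
    · have hAy : (GG m t).Adj A y := hxA ▸ he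
      have hBy : (GG m t).Adj B y := (htwin y).1 hAy
      obtain ⟨hyA, hyB⟩ := hne_z y hAy
      have hτx : τ x = B := by rw [hτ, swapIso_apply, hxA, Equiv.swap_apply_left]
      have hτy : τ y = y := by rw [hτ, swapIso_apply, Equiv.swap_apply_of_ne_of_ne hyA hyB]
      have key : c ⟨s(B, y), hBy⟩ = c ⟨s(x, y), he⟩ :=
        (colAB y hAy hBy).symm.trans (color_congr c (show s(A,y) = s(x,y) by rw [hxA]))
      exact (color_congr c (show s(τ x, τ y) = s(B, y) by rw [hτx, hτy])).trans key
    · by_cases hxB : x = B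
      · have hBy : (GG m t).Adj B y := hxB ▸ he
        have hAy : (GG m t).Adj A y := (htwin y).2 hBy
        obtain ⟨hyA, hyB⟩ := hne_z y hAy
        have hτx : τ x = A := by rw [hτ, swapIso_apply, hxB, Equiv.swap_apply_right]
        have hτy : τ y = y := by rw [hτ, swapIso_apply, Equiv.swap_apply_of_ne_of_ne hyA hyB]
        have key : c ⟨s(A, y), hAy⟩ = c ⟨s(x, y), he⟩ :=
          (colAB y hAy hBy).trans (color_congr c (show s(B,y) = s(x,y) by rw [hxB]))
        exact (color_congr c (show s(τ x, τ y) = s(A, y) by rw [hτx, hτy])).trans key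
      · by_cases hyA : y = A
        · have hAx : (GG m t).Adj A x := (hyA ▸ he).symm
          have hBx : (GG m t).Adj B x := (htwin x).1 hAx
          obtain ⟨hxA', hxB'⟩ := hne_z x hAx
          have hτy : τ y = B := by rw [hτ, swapIso_apply, hyA, Equiv.swap_apply_left]
          have hτx : τ x = x := by
            rw [hτ, swapIso_apply, Equiv.swap_apply_of_ne_of_ne hxA' hxB']
          have key : c ⟨s(B, x), hBx⟩ = c ⟨s(x, y), he⟩ :=
            (colAB x hAx hBx).symm.trans
              (color_congr c (show s(A,x) = s(x,y) by rw [hyA]; exact Sym2.eq_swap))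
          exact (color_congr c
            (show s(τ x, τ y) = s(B, x) by rw [hτx, hτy]; exact Sym2.eq_swap)).trans key
        · by_cases hyB : y = B
          · have hBx : (GG m t).Adj B x := (hyB ▸ he).symm
            have hAx : (GG m t).Adj A x := (htwin x).2 hBx
            obtain ⟨hxA', hxB'⟩ := hne_z x hAx
            have hτy : τ y = A := by rw [hτ, swapIso_apply, hyB, Equiv.swap_apply_right]
            have hτx : τ x = x := by
              rw [hτ, swapIso_apply, Equiv.swap_apply_of_ne_of_ne hxA' hxB']
            have key : c ⟨s(A, x), hAx⟩ = c ⟨s(x, y), he⟩ :=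
              (colAB x hAx hBx).trans
                (color_congr c (show s(B,x) = s(x,y) by rw [hyB]; exact Sym2.eq_swap))
            exact (color_congr c
              (show s(τ x, τ y) = s(A, x) by rw [hτx, hτy]; exact Sym2.eq_swap)).trans key
          · have hτx : τ x = x := by
              rw [hτ, swapIso_apply, Equiv.swap_apply_of_ne_of_ne hxA hxB]
            have hτy : τ y = y := by
              rw [hτ, swapIso_apply, Equiv.swap_apply_of_ne_of_ne hyA hyB]
            exact color_congr c (show s(τ x, τ y) = s(x, y) by rw [hτx, hτy])
  have := hc τ hpres A
  rw [hτ, swapIso_apply, Equiv.swap_apply_left] at this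
  exact hAB this.symm

end Coloring

/-! ### The reflection automorphism -/

/-- level map for leaves -/
def lam (t ℓ : ℕ) : ℕ := if ℓ % 2 = t % 2 then ℓ - 1 else ℓ + 1

/-- level map for centers -/
def gam (t j : ℕ) : ℕ := if j % 2 = t % 2 then j + 1 else j - 1

lemma lam_le (t : ℕ) {ℓ : ℕ} (h : ℓ ≤ t) : lam t ℓ ≤ t := by
  unfold lam; split_ifs <;> omega

lemma lam_invol (t : ℕ) {ℓ : ℕ} (h : ℓ ≤ t) : lam t (lam t ℓ) = ℓ := by
  unfold lam; split_ifs <;> omega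

lemma gam_lt (t : ℕ) {j : ℕ} (h : j < t) : gam t j < t := by
  unfold gam; split_ifs <;> omega

lemma gam_invol (t : ℕ) {j : ℕ} (h : j < t) : gam t (gam t j) = j := by
  unfold gam; split_ifs <;> omega

def Lam (j : Fin (t + 1)) : Fin (t + 1) :=
  ⟨lam t j.val, by have := lam_le t (Nat.lt_succ_iff.mp j.isLt); omega⟩

lemma Lam_Lam (j : Fin (t + 1)) : Lam (Lam j) = j :=
  Fin.ext (lam_invol t (Nat.lt_succ_iff.mp j.isLt))

/-- the reflection as a bare function, given a family `σ` of leaf re-indexings -/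
def rfl_fun (σ : (j : Fin (t + 1)) → {a : Fin (m + 1) // a ≠ 0} → {a : Fin (m + 1) // a ≠ 0}) :
    VV m t → VV m t
  | Sum.inr _ => Sum.inl (⟨t, Nat.lt_succ_self t⟩, 0)
  | Sum.inl (j, a) =>
      if h : a = 0 then
        if hj : j.val = t then rt
        else Sum.inl (⟨gam t j.val, by
          have := gam_lt t (show j.val < t by omega); omega⟩, 0)
      else Sum.inl (Lam j, (σ j ⟨a, h⟩).val)

variable {σ : (j : Fin (t + 1)) → {a : Fin (m + 1) // a ≠ 0} → {a : Fin (m + 1) // a ≠ 0}}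

lemma rfl_fun_lf (j : Fin (t+1)) (a : Fin (m+1)) (ha : a ≠ 0) :
    rfl_fun σ (lf j a) = lf (Lam j) (σ j ⟨a, ha⟩).val := by
  rw [lf, rfl_fun, dif_neg ha]; rfl

lemma rfl_fun_rt : rfl_fun σ (rt : VV m t) = Sum.inl (⟨t, Nat.lt_succ_self t⟩, 0) := rfl

/-- image of the down-neighbour, generic case -/
lemma rfl_fun_Dv (ht : 1 ≤ t) (j : Fin (t+1)) (hns : ¬(j.val = 0 ∧ t % 2 = 0)) :
    rfl_fun σ (Dv m j) = Dv m (Lam j) := by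
  rw [Dv, rfl_fun, dif_pos rfl, dif_neg (show ¬(j.val - 1 = t) by omega), Dv]
  refine congrArg Sum.inl (Prod.ext (Fin.ext ?_) rfl)
  show gam t (j.val - 1) = lam t j.val - 1
  have hj := Nat.lt_succ_iff.mp j.isLt
  unfold gam lam; split_ifs <;> omega

/-- image of the down-neighbour, swapped case -/
lemma rfl_fun_Dv0 (ht : 1 ≤ t) (j : Fin (t+1)) (h0 : j.val = 0) (he : t % 2 = 0) :
    rfl_fun σ (Dv m j) = Uv m (Lam j) := by
  rw [Dv, rfl_fun, dif_pos rfl, dif_neg (show ¬(j.val - 1 = t) by omega), Uv,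
    dif_neg (show ¬((Lam j).val = t) by show ¬(lam t j.val = t); unfold lam; split_ifs <;> omega)]
  refine congrArg Sum.inl (Prod.ext (Fin.ext ?_) rfl)
  show gam t (j.val - 1) = (Lam j).val + 1
  show gam t (j.val - 1) = lam t j.val + 1
  unfold gam lam; split_ifs <;> omega

/-- image of the up-neighbour, generic case -/
lemma rfl_fun_Uv (ht : 1 ≤ t) (j : Fin (t+1)) (hns : ¬(j.val = 0 ∧ t % 2 = 0)) :
    rfl_fun σ (Uv m j) = Uv m (Lam j) := by
  have hj := Nat.lt_succ_iff.mp j.isLt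
  rw [Uv]
  split_ifs with hjt
  · -- `Uv j = rt`, and `lam t j = t - 1`
    rw [rfl_fun_rt, Uv, dif_neg (show ¬((Lam j).val = t) by
      show ¬(lam t j.val = t); unfold lam; split_ifs <;> omega)]
    refine congrArg Sum.inl (Prod.ext (Fin.ext ?_) rfl)
    show t = lam t j.val + 1
    unfold lam; split_ifs <;> omega
  · rw [rfl_fun, dif_pos rfl]
    split_ifs with hj1
    · have hj1' : j.val + 1 = t := hj1
      rw [Uv, dif_pos (show (Lam j).val = t by
        show lam t j.val = t; unfold lam; split_ifs <;> omega)]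
    · have hj1' : ¬(j.val + 1 = t) := hj1
      rw [Uv, dif_neg (show ¬((Lam j).val = t) by
        show ¬(lam t j.val = t); unfold lam; split_ifs <;> omega)]
      refine congrArg Sum.inl (Prod.ext (Fin.ext ?_) rfl)
      show gam t (j.val + 1) = lam t j.val + 1
      unfold gam lam; split_ifs <;> omega

/-- image of the up-neighbour, swapped case -/
lemma rfl_fun_Uv0 (ht : 1 ≤ t) (j : Fin (t+1)) (h0 : j.val = 0) (he : t % 2 = 0) :
    rfl_fun σ (Uv m j) = Dv m (Lam j) := by
  have ht2 : 2 ≤ t := by omega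
  rw [Uv, dif_neg (show ¬(j.val = t) by omega), rfl_fun, dif_pos rfl,
    dif_neg (show ¬(j.val + 1 = t) by omega), Dv]
  refine congrArg Sum.inl (Prod.ext (Fin.ext ?_) rfl)
  show gam t (j.val + 1) = lam t j.val - 1
  unfold gam lam; split_ifs <;> omega

lemma rfl_fun_invol (hσ : ∀ j x, σ (Lam j) (σ j x) = x) (v : VV m t) :
    rfl_fun σ (rfl_fun σ v) = v := by
  rcases v with ⟨j, a⟩ | u
  · by_cases ha : a = 0
    · subst ha
      rw [rfl_fun, dif_pos rfl]
      split_ifs with hjt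
      · rw [rfl_fun_rt]
        exact congrArg Sum.inl (Prod.ext (Fin.ext hjt.symm) rfl)
      · rw [rfl_fun, dif_pos rfl,
          dif_neg (show ¬(gam t j.val = t) by
            have := gam_lt t (show j.val < t by have := j.isLt; omega); omega)]
        refine congrArg Sum.inl (Prod.ext (Fin.ext ?_) rfl)
        show gam t (gam t j.val) = j.val
        exact gam_invol t (by have := j.isLt; omega)
    · show rfl_fun σ (rfl_fun σ (lf j a)) = lf j a
      rw [rfl_fun_lf j a ha, rfl_fun_lf (Lam j) _ (σ j ⟨a, ha⟩).2]
      have h1 : Lam (Lam j) = j := Lam_Lam j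
      have h2 : (σ (Lam j) ⟨(σ j ⟨a, ha⟩).val, (σ j ⟨a, ha⟩).2⟩).val = a := by
        rw [show (⟨(σ j ⟨a, ha⟩).val, (σ j ⟨a, ha⟩).2⟩ : {a : Fin (m+1) // a ≠ 0})
            = σ j ⟨a, ha⟩ from rfl, hσ j ⟨a, ha⟩]
      rw [h1, h2]
  · cases u
    show rfl_fun σ (rfl_fun σ rt) = rt
    rw [rfl_fun_rt, rfl_fun, dif_pos rfl, dif_pos rfl]

lemma rfl_fun_adj (ht : 1 ≤ t) {x y : VV m t} (h : (GG m t).Adj x y) :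
    (GG m t).Adj (rfl_fun σ x) (rfl_fun σ y) := by
  have main : ∀ (j : Fin (t+1)) (a : Fin (m+1)) (ha : a ≠ 0) (z : VV m t),
      (z = Dv m j ∨ z = Uv m j) →
      (GG m t).Adj (rfl_fun σ (lf j a)) (rfl_fun σ z) := by
    intro j a ha z hz
    rw [rfl_fun_lf j a ha]
    by_cases hns : j.val = 0 ∧ t % 2 = 0
    · rcases hz with rfl | rfl
      · rw [rfl_fun_Dv0 (σ := σ) ht j hns.1 hns.2]
        exact adj_lf_Uv (Lam j) _ (σ j ⟨a, ha⟩).2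
      · rw [rfl_fun_Uv0 (σ := σ) ht j hns.1 hns.2]
        exact adj_lf_Dv (Lam j) _ (σ j ⟨a, ha⟩).2
    · rcases hz with rfl | rfl
      · rw [rfl_fun_Dv (σ := σ) ht j hns]
        exact adj_lf_Dv (Lam j) _ (σ j ⟨a, ha⟩).2
      · rw [rfl_fun_Uv (σ := σ) ht j hns]
        exact adj_lf_Uv (Lam j) _ (σ j ⟨a, ha⟩).2
  rcases edge_classify h with ⟨j, a, ha, ⟨rfl, hz⟩ | ⟨rfl, hz⟩⟩ | ⟨rfl, rfl⟩ | ⟨rfl, rfl⟩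
  · exact main j a ha _ hz
  · exact (main j a ha _ hz).symm
  · -- x = ctr t, y = rt
    have h1 : rfl_fun σ (lf (Fin.last t) (0 : Fin (m+1))) = rt := by
      rw [lf, rfl_fun, dif_pos rfl, dif_pos (show (Fin.last t).val = t from rfl)]
    rw [h1, rfl_fun_rt]
    exact (adj_rl _ _).2 rfl
  · have h1 : rfl_fun σ (lf (Fin.last t) (0 : Fin (m+1))) = rt := by
      rw [lf, rfl_fun, dif_pos rfl, dif_pos (show (Fin.last t).val = t from rfl)]
    rw [h1, rfl_fun_rt]
    exact (adj_lr _ _).2 rfl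

/-- the reflection as a graph automorphism -/
def rflIso (σ : (j : Fin (t + 1)) → {a : Fin (m + 1) // a ≠ 0} → {a : Fin (m + 1) // a ≠ 0})
    (hσ : ∀ j x, σ (Lam j) (σ j x) = x) (ht : 1 ≤ t) : GG m t ≃g GG m t where
  toFun := rfl_fun σ
  invFun := rfl_fun σ
  left_inv := rfl_fun_invol hσ
  right_inv := rfl_fun_invol hσ
  map_rel_iff' := by
    intro x y
    show (GG m t).Adj (rfl_fun σ x) (rfl_fun σ y) ↔ (GG m t).Adj x y
    constructor
    · intro h
      have h2 := rfl_fun_adj (σ := σ) ht h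
      rwa [rfl_fun_invol hσ, rfl_fun_invol hσ] at h2
    · exact rfl_fun_adj ht

@[simp] lemma rflIso_apply (σ) (hσ : ∀ j x, σ (Lam j) (σ j x) = x) (ht : 1 ≤ t) (x : VV m t) :
    rflIso σ hσ ht x = rfl_fun σ x := rfl

lemma pr_fst {k : ℕ} (c : (GG m t).edgeSet → Fin k) (j : Fin (t+1))
    (x : {a : Fin (m+1) // a ≠ 0}) :
    (pr c j x).1 = c ⟨s(lf j x.val, Dv m j), adj_lf_Dv j x.val x.2⟩ := rfl

lemma pr_snd {k : ℕ} (c : (GG m t).edgeSet → Fin k) (j : Fin (t+1))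
    (x : {a : Fin (m+1) // a ≠ 0}) :
    (pr c j x).2 = c ⟨s(lf j x.val, Uv m j), adj_lf_Uv j x.val x.2⟩ := rfl

lemma key (hm : 2 ≤ m) (ht : 1 ≤ t) {k : ℕ} (c : (GG m t).edgeSet → Fin k)
    (hc : IsDistEdgeColoring (GG m t) c) : m + 1 ≤ k ^ 2 := by
  by_contra hlt
  push_neg at hlt
  have hsmall : k ^ 2 ≤ m := by omega
  have hcard : Fintype.card {a : Fin (m+1) // a ≠ 0} = m := by
    have h1 : Fintype.card {a : Fin (m+1) // a = 0} = 1 := Fintype.card_subtype_eq (0 : Fin (m+1))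
    have h2 : Fintype.card {a : Fin (m+1) // ¬ a = 0}
        = Fintype.card (Fin (m+1)) - Fintype.card {a : Fin (m+1) // a = 0} :=
      Fintype.card_subtype_compl _
    rw [h1, Fintype.card_fin] at h2
    simpa using h2
  have hinj := pr_injective c hc
  have hle : m ≤ k ^ 2 := by
    have h0 := Fintype.card_le_of_injective _ (hinj 0)
    rwa [hcard, Fintype.card_prod, Fintype.card_fin, ← sq] at h0
  have hcards : Fintype.card {a : Fin (m+1) // a ≠ 0} = Fintype.card (Fin k × Fin k) := by
    rw [hcard, Fintype.card_prod, Fintype.card_fin, ← sq]; omega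
  have hbij : ∀ j, Function.Bijective (pr c j) := fun j =>
    (Fintype.bijective_iff_injective_and_card _).mpr ⟨hinj j, hcards⟩
  let E : (j : Fin (t+1)) → ({a : Fin (m+1) // a ≠ 0} ≃ (Fin k × Fin k)) :=
    fun j => Equiv.ofBijective _ (hbij j)
  let sw : Fin (t+1) → (Fin k × Fin k → Fin k × Fin k) :=
    fun j => if j.val = 0 ∧ t % 2 = 0 then Prod.swap else id
  let σ : (j : Fin (t + 1)) → {a : Fin (m + 1) // a ≠ 0} → {a : Fin (m + 1) // a ≠ 0} :=
    fun j x => (E (Lam j)).symm (sw j (E j x))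
  have hL0 : ∀ j : Fin (t+1), ((Lam j).val = 0 ∧ t % 2 = 0) ↔ (j.val = 0 ∧ t % 2 = 0) := by
    intro j
    have hj := Nat.lt_succ_iff.mp j.isLt
    show (lam t j.val = 0 ∧ _) ↔ _
    unfold lam; split_ifs with hpar
    · constructor <;> rintro ⟨h1, h2⟩ <;> exact ⟨by omega, h2⟩
    · constructor
      · rintro ⟨h1, -⟩
        first
          | exact h1.elim
          | exact absurd (show j.val % 2 = t % 2 by omega) hpar
      · rintro ⟨h1, h2⟩
        exact absurd (show j.val % 2 = t % 2 by omega) hpar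
  have hsw : ∀ j, sw (Lam j) = sw j := by
    intro j
    show (if (Lam j).val = 0 ∧ t % 2 = 0 then Prod.swap else id)
      = (if j.val = 0 ∧ t % 2 = 0 then Prod.swap else id)
    by_cases h : j.val = 0 ∧ t % 2 = 0
    · rw [if_pos ((hL0 j).mpr h), if_pos h]
    · rw [if_neg (fun hh => h ((hL0 j).mp hh)), if_neg h]
  have hswsw : ∀ j p, sw j (sw j p) = p := by
    intro j p
    show (if _ then Prod.swap else id) ((if _ then Prod.swap else id) p) = p
    split_ifs <;> simp
  have hσ : ∀ j x, σ (Lam j) (σ j x) = x := by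
    intro j x
    show (E (Lam (Lam j))).symm (sw (Lam j) (E (Lam j) ((E (Lam j)).symm (sw j (E j x))))) = x
    rw [Equiv.apply_symm_apply, Lam_Lam, hsw, hswsw, Equiv.symm_apply_apply]
  have hEapp : ∀ j x, E j x = pr c j x := fun _ _ => rfl
  have hEσ : ∀ j x, pr c (Lam j) (σ j x) = sw j (pr c j x) := by
    intro j x
    have : E (Lam j) (σ j x) = sw j (E j x) := Equiv.apply_symm_apply _ _
    rw [hEapp, hEapp] at this
    exact this
  set ρ := rflIso σ hσ ht with hρ
  have hpres : ∀ e : (GG m t).edgeSet, c (ρ.mapEdgeSet e) = c e := by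
    rintro ⟨e, he⟩
    induction e using Sym2.ind with
    | _ x y =>
    -- the value of the mapped edge is definitionally `s(rfl_fun σ x, rfl_fun σ y)`
    have core : ∀ (j : Fin (t+1)) (a : Fin (m+1)) (ha : a ≠ 0) (z : VV m t)
        (hz : z = Dv m j ∨ z = Uv m j) (h1 : (GG m t).Adj (lf j a) z)
        (h2 : (GG m t).Adj (rfl_fun σ (lf j a)) (rfl_fun σ z)),
        c ⟨s(rfl_fun σ (lf j a), rfl_fun σ z), h2⟩ = c ⟨s(lf j a, z), h1⟩ := by
      intro j a ha z hz h1 h2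
      by_cases hns : j.val = 0 ∧ t % 2 = 0
      · have hswj : sw j = Prod.swap := if_pos hns
        rcases hz with rfl | rfl
        · calc c ⟨s(rfl_fun σ (lf j a), rfl_fun σ (Dv m j)), h2⟩
              = c ⟨s(lf (Lam j) (σ j ⟨a, ha⟩).val, Uv m (Lam j)),
                  adj_lf_Uv (Lam j) (σ j ⟨a, ha⟩).val (σ j ⟨a, ha⟩).2⟩ :=
                color_congr c (show s(rfl_fun σ (lf j a), rfl_fun σ (Dv m j))
                    = s(lf (Lam j) (σ j ⟨a, ha⟩).val, Uv m (Lam j)) by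
                  rw [rfl_fun_lf j a ha, rfl_fun_Dv0 (σ := σ) ht j hns.1 hns.2])
            _ = (pr c (Lam j) (σ j ⟨a, ha⟩)).2 := (pr_snd c (Lam j) _).symm
            _ = (sw j (pr c j ⟨a, ha⟩)).2 := by rw [hEσ j ⟨a, ha⟩]
            _ = (pr c j ⟨a, ha⟩).1 := by rw [hswj, Prod.snd_swap]
            _ = c ⟨s(lf j a, Dv m j), adj_lf_Dv j a ha⟩ := pr_fst c j ⟨a, ha⟩
            _ = c ⟨s(lf j a, Dv m j), h1⟩ := color_congr c rfl
        · calc c ⟨s(rfl_fun σ (lf j a), rfl_fun σ (Uv m j)), h2⟩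
              = c ⟨s(lf (Lam j) (σ j ⟨a, ha⟩).val, Dv m (Lam j)),
                  adj_lf_Dv (Lam j) (σ j ⟨a, ha⟩).val (σ j ⟨a, ha⟩).2⟩ :=
                color_congr c (show s(rfl_fun σ (lf j a), rfl_fun σ (Uv m j))
                    = s(lf (Lam j) (σ j ⟨a, ha⟩).val, Dv m (Lam j)) by
                  rw [rfl_fun_lf j a ha, rfl_fun_Uv0 (σ := σ) ht j hns.1 hns.2])
            _ = (pr c (Lam j) (σ j ⟨a, ha⟩)).1 := (pr_fst c (Lam j) _).symm
            _ = (sw j (pr c j ⟨a, ha⟩)).1 := by rw [hEσ j ⟨a, ha⟩]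
            _ = (pr c j ⟨a, ha⟩).2 := by rw [hswj, Prod.fst_swap]
            _ = c ⟨s(lf j a, Uv m j), adj_lf_Uv j a ha⟩ := pr_snd c j ⟨a, ha⟩
            _ = c ⟨s(lf j a, Uv m j), h1⟩ := color_congr c rfl
      · have hswj : sw j = id := if_neg hns
        rcases hz with rfl | rfl
        · calc c ⟨s(rfl_fun σ (lf j a), rfl_fun σ (Dv m j)), h2⟩
              = c ⟨s(lf (Lam j) (σ j ⟨a, ha⟩).val, Dv m (Lam j)),
                  adj_lf_Dv (Lam j) (σ j ⟨a, ha⟩).val (σ j ⟨a, ha⟩).2⟩ :=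
                color_congr c (show s(rfl_fun σ (lf j a), rfl_fun σ (Dv m j))
                    = s(lf (Lam j) (σ j ⟨a, ha⟩).val, Dv m (Lam j)) by
                  rw [rfl_fun_lf j a ha, rfl_fun_Dv (σ := σ) ht j hns])
            _ = (pr c (Lam j) (σ j ⟨a, ha⟩)).1 := (pr_fst c (Lam j) _).symm
            _ = (sw j (pr c j ⟨a, ha⟩)).1 := by rw [hEσ j ⟨a, ha⟩]
            _ = (pr c j ⟨a, ha⟩).1 := by rw [hswj]; rfl
            _ = c ⟨s(lf j a, Dv m j), adj_lf_Dv j a ha⟩ := pr_fst c j ⟨a, ha⟩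
            _ = c ⟨s(lf j a, Dv m j), h1⟩ := color_congr c rfl
        · calc c ⟨s(rfl_fun σ (lf j a), rfl_fun σ (Uv m j)), h2⟩
              = c ⟨s(lf (Lam j) (σ j ⟨a, ha⟩).val, Uv m (Lam j)),
                  adj_lf_Uv (Lam j) (σ j ⟨a, ha⟩).val (σ j ⟨a, ha⟩).2⟩ :=
                color_congr c (show s(rfl_fun σ (lf j a), rfl_fun σ (Uv m j))
                    = s(lf (Lam j) (σ j ⟨a, ha⟩).val, Uv m (Lam j)) by
                  rw [rfl_fun_lf j a ha, rfl_fun_Uv (σ := σ) ht j hns])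
            _ = (pr c (Lam j) (σ j ⟨a, ha⟩)).2 := (pr_snd c (Lam j) _).symm
            _ = (sw j (pr c j ⟨a, ha⟩)).2 := by rw [hEσ j ⟨a, ha⟩]
            _ = (pr c j ⟨a, ha⟩).2 := by rw [hswj]; rfl
            _ = c ⟨s(lf j a, Uv m j), adj_lf_Uv j a ha⟩ := pr_snd c j ⟨a, ha⟩
            _ = c ⟨s(lf j a, Uv m j), h1⟩ := color_congr c rfl
    have hmapval : c (ρ.mapEdgeSet ⟨s(x, y), he⟩)
        = c ⟨s(rfl_fun σ x, rfl_fun σ y), rfl_fun_adj ht he⟩ := color_congr c rfl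
    rw [hmapval]
    rcases edge_classify he with ⟨j, a, ha, ⟨rfl, hz⟩ | ⟨rfl, hz⟩⟩ | ⟨rfl, rfl⟩ | ⟨rfl, rfl⟩
    · exact core j a ha _ hz he _
    · -- y is the leaf
      have h1 : (GG m t).Adj (lf j a) x := he.symm
      have h2 : (GG m t).Adj (rfl_fun σ (lf j a)) (rfl_fun σ x) := rfl_fun_adj ht h1
      calc c ⟨s(rfl_fun σ x, rfl_fun σ (lf j a)), _⟩
          = c ⟨s(rfl_fun σ (lf j a), rfl_fun σ x), h2⟩ := color_congr c (Sym2.eq_swap)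
        _ = c ⟨s(lf j a, x), h1⟩ := core j a ha x hz h1 h2
        _ = c ⟨s(x, lf j a), he⟩ := color_congr c (Sym2.eq_swap)
    · -- x = ctr t, y = rt
      have hFx : rfl_fun σ (lf (Fin.last t) (0 : Fin (m+1))) = rt := by
        rw [lf, rfl_fun, dif_pos rfl, dif_pos (show (Fin.last t).val = t from rfl)]
      refine color_congr c ?_
      show s(rfl_fun σ (lf (Fin.last t) 0), rfl_fun σ rt) = s(lf (Fin.last t) 0, rt)
      rw [hFx, rfl_fun_rt,
        show (Sum.inl (⟨t, Nat.lt_succ_self t⟩, (0:Fin (m+1))) : VV m t)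
          = lf (Fin.last t) 0 from rfl]
      exact Sym2.eq_swap
    · have hFx : rfl_fun σ (lf (Fin.last t) (0 : Fin (m+1))) = rt := by
        rw [lf, rfl_fun, dif_pos rfl, dif_pos (show (Fin.last t).val = t from rfl)]
      refine color_congr c ?_
      show s(rfl_fun σ rt, rfl_fun σ (lf (Fin.last t) 0)) = s(rt, lf (Fin.last t) 0)
      rw [hFx, rfl_fun_rt,
        show (Sum.inl (⟨t, Nat.lt_succ_self t⟩, (0:Fin (m+1))) : VV m t)
          = lf (Fin.last t) 0 from rfl]
      exact Sym2.eq_swap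
  have hfix := hc ρ hpres rt
  rw [hρ, rflIso_apply, rfl_fun_rt] at hfix
  exact absurd hfix (by rw [rt]; simp)

end MycStar

theorem distIndex_genMyc_star_ge (m t : ℕ) (hm : 2 ≤ m) (ht : 1 ≤ t) :
    sInf {r : ℕ | m + 1 ≤ r ^ 2} ≤ distIndex (genMyc (starGraphK1n m) t) := by
  have hne : {k : ℕ | ∃ c : (genMyc (starGraphK1n m) t).edgeSet → Fin k,
      IsDistEdgeColoring (genMyc (starGraphK1n m) t) c}.Nonempty := by
    obtain ⟨k, c, hc⟩ := MycStar.exists_dist (MycStar.GG m t) (MycStar.two_nbrs hm)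
    exact ⟨k, c, hc⟩
  rw [distIndex]
  have hmem := Nat.sInf_mem hne
  obtain ⟨c, hc⟩ := hmem
  exact Nat.sInf_le (MycStar.key hm ht c hc)
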